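/- Let M(n) be the maximum size of a union-free family of non-empty subsets of [n]. Then for all positive integers c and k, M(ck) ≤ (2^{ck} − 1) · M(k) / (2^k − 1). -/

import Mathlib

/-- A family is union-free if no member equals the union of a nonempty
collection of other members. -/
def UnionFree (F : Finset (Finset ℕ)) : Prop :=
  ∀ A ∈ F, ∀ I ⊆ F.erase A, I.Nonempty → A ≠ I.sup id

/-- `M n` is the maximum size of a union-free family of non-empty subsets
of `[n] = {1, …, n}`. -/
noncomputable def M (n : ℕ) : ℕ :=
  sSup {k | ∃ F : Finset (Finset ℕ),
    (∀ A ∈ F, A ⊆ Finset.Icc 1 n ∧ A.Nonempty) ∧ UnionFree F ∧ F.card = k}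

lemma unionFree_subset {F G : Finset (Finset ℕ)} (h : UnionFree F) (hGF : G ⊆ F) :
    UnionFree G := by
  intro A hA I hI hne
  exact h A (hGF hA) I (hI.trans (Finset.erase_subset_erase _ hGF)) hne

lemma Mset_bdd (n : ℕ) : BddAbove {k | ∃ F : Finset (Finset ℕ),
    (∀ A ∈ F, A ⊆ Finset.Icc 1 n ∧ A.Nonempty) ∧ UnionFree F ∧ F.card = k} := by
  refine ⟨2 ^ n, ?_⟩
  rintro k ⟨F, hF, -, rfl⟩
  calc F.card ≤ (Finset.Icc 1 n).powerset.card := by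
        apply Finset.card_le_card
        intro A hA
        exact Finset.mem_powerset.2 (hF A hA).1
    _ = 2 ^ n := by simp [Finset.card_powerset]

lemma le_M {n : ℕ} {F : Finset (Finset ℕ)}
    (hF : ∀ A ∈ F, A ⊆ Finset.Icc 1 n ∧ A.Nonempty) (hUF : UnionFree F) :
    F.card ≤ M n :=
  le_csSup (Mset_bdd n) ⟨F, hF, hUF, rfl⟩

lemma exists_attain (n : ℕ) : ∃ F : Finset (Finset ℕ),
    (∀ A ∈ F, A ⊆ Finset.Icc 1 n ∧ A.Nonempty) ∧ UnionFree F ∧ F.card = M n := by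
  have h0 : (0 : ℕ) ∈ {k | ∃ F : Finset (Finset ℕ),
      (∀ A ∈ F, A ⊆ Finset.Icc 1 n ∧ A.Nonempty) ∧ UnionFree F ∧ F.card = k} :=
    ⟨∅, by simp, by intro A hA; simp at hA, by simp⟩
  exact Nat.sSup_mem ⟨0, h0⟩ (Mset_bdd n)

lemma sup_hom_aux (f : Finset ℕ → Finset ℕ) (h0 : f ∅ = ∅)
    (hu : ∀ A B, f (A ∪ B) = f A ∪ f B) (I : Finset (Finset ℕ)) :
    f (I.sup id) = I.sup f := by
  classical
  induction I using Finset.induction_on with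
  | empty => simpa using h0
  | @insert A s hA ih =>
    rw [Finset.sup_insert, Finset.sup_insert, ← ih]
    exact hu _ _

lemma M_subadd (a b : ℕ) : M (a + b) ≤ M a + 2 ^ a * M b := by
  classical
  obtain ⟨F, hF, hUF, hcard⟩ := exists_attain (a + b)
  rw [← hcard]
  set φ : Finset ℕ → Finset ℕ :=
    fun A => (A.filter (fun x => a < x)).image (fun x => x - a) with hφ
  have hrec : ∀ A : Finset ℕ, (φ A).image (fun x => x + a) = A.filter (fun x => a < x) := by
    intro A
    rw [hφ]
    simp only [Finset.image_image]
    rw [Finset.image_congr (g := id), Finset.image_id]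
    intro x hx
    simp only [Finset.mem_coe, Finset.mem_filter] at hx
    simp [Nat.sub_add_cancel hx.2.le]
  have hdecomp : ∀ A : Finset ℕ,
      A = A.filter (fun x => ¬ a < x) ∪ (φ A).image (fun x => x + a) := by
    intro A
    rw [hrec A, Finset.union_comm, Finset.filter_union_filter_not_eq]
  have hinj : ∀ A B : Finset ℕ,
      A.filter (fun x => ¬ a < x) = B.filter (fun x => ¬ a < x) → φ A = φ B → A = B := by
    intro A B h1 h2
    rw [hdecomp A, hdecomp B, h1, h2]
  rw [← Finset.card_filter_add_card_filter_not
    (p := fun A => A.filter (fun x => a < x) = ∅)]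
  gcongr
  · -- low part
    set F₀ := F.filter (fun A => A.filter (fun x => a < x) = ∅) with hF₀
    refine le_M ?_ (unionFree_subset hUF (Finset.filter_subset _ _))
    intro A hA
    rw [hF₀, Finset.mem_filter] at hA
    obtain ⟨hAF, hAe⟩ := hA
    refine ⟨?_, (hF A hAF).2⟩
    intro x hx
    have hx1 := (hF A hAF).1 hx
    rw [Finset.mem_Icc] at hx1 ⊢
    have := Finset.filter_eq_empty_iff.1 hAe hx
    omega
  · -- high part
    set F₁ := F.filter (fun A => ¬ A.filter (fun x => a < x) = ∅) with hF₁
    have hfib : F₁.card = ∑ S ∈ (Finset.Icc 1 a).powerset,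
        (F₁.filter (fun A => A.filter (fun x => ¬ a < x) = S)).card := by
      apply Finset.card_eq_sum_card_fiberwise
      intro A hA
      rw [Finset.mem_coe] at hA ⊢
      rw [Finset.mem_powerset]
      intro x hx
      rw [Finset.mem_filter] at hx
      rw [hF₁, Finset.mem_filter] at hA
      have hx1 := (hF A hA.1).1 hx.1
      rw [Finset.mem_Icc] at hx1 ⊢
      omega
    rw [hfib]
    have hbound : ∀ S ∈ (Finset.Icc 1 a).powerset,
        (F₁.filter (fun A => A.filter (fun x => ¬ a < x) = S)).card ≤ M b := by
      intro S _
      set C := F₁.filter (fun A => A.filter (fun x => ¬ a < x) = S) with hC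
      have hCF : C ⊆ F := (Finset.filter_subset _ _).trans (Finset.filter_subset _ _)
      have hCmem : ∀ A ∈ C, A ∈ F ∧ ¬ A.filter (fun x => a < x) = ∅ ∧
          A.filter (fun x => ¬ a < x) = S := by
        intro A hA
        rw [hC, Finset.mem_filter, hF₁, Finset.mem_filter] at hA
        exact ⟨hA.1.1, hA.1.2, hA.2⟩
      have hinjC : Set.InjOn φ C := by
        intro A hA B hB h
        exact hinj A B (((hCmem A hA).2.2).trans ((hCmem B hB).2.2).symm) h
      rw [← Finset.card_image_of_injOn hinjC]
      refine le_M ?_ ?_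
      · rintro T hT
        rw [Finset.mem_image] at hT
        obtain ⟨A, hA, rfl⟩ := hT
        obtain ⟨hAF, hAne, -⟩ := hCmem A hA
        constructor
        · intro y hy
          rw [hφ] at hy
          simp only [Finset.mem_image, Finset.mem_filter] at hy
          obtain ⟨x, ⟨hxA, hxa⟩, rfl⟩ := hy
          have := (hF A hAF).1 hxA
          rw [Finset.mem_Icc] at this ⊢
          omega
        · rw [hφ]
          apply Finset.Nonempty.image
          exact Finset.nonempty_iff_ne_empty.2 hAne
      · -- union-free
        intro T hT I hI hIne heq
        rw [Finset.mem_image] at hT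
        obtain ⟨A, hAC, rfl⟩ := hT
        set J := C.filter (fun B => φ B ∈ I) with hJ
        have hJC : J ⊆ C := Finset.filter_subset _ _
        have hJmem : ∀ B ∈ J, B ∈ C ∧ φ B ∈ I := by
          intro B hB; rw [hJ, Finset.mem_filter] at hB; exact hB
        have hJA : ∀ B ∈ J, B ≠ A := by
          intro B hB hBA
          obtain ⟨hBC, hBI⟩ := hJmem B hB
          have := hI hBI
          rw [Finset.mem_erase] at this
          exact this.1 (by rw [hBA])
        have hJne : J.Nonempty := by
          obtain ⟨U, hU⟩ := hIne
          have hUG := Finset.mem_of_mem_erase (hI hU)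
          rw [Finset.mem_image] at hUG
          obtain ⟨B, hBC, rfl⟩ := hUG
          exact ⟨B, by rw [hJ, Finset.mem_filter]; exact ⟨hBC, hU⟩⟩
        have hJimg : J.image φ = I := by
          apply Finset.Subset.antisymm
          · intro U hU
            rw [Finset.mem_image] at hU
            obtain ⟨B, hB, rfl⟩ := hU
            exact (hJmem B hB).2
          · intro U hU
            have hUG := Finset.mem_of_mem_erase (hI hU)
            rw [Finset.mem_image] at hUG
            obtain ⟨B, hBC, rfl⟩ := hUG
            exact Finset.mem_image_of_mem _ (by rw [hJ, Finset.mem_filter]; exact ⟨hBC, hU⟩)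
        refine hUF A (hCF hAC) J ?_ hJne ?_
        · intro B hB
          rw [Finset.mem_erase]
          exact ⟨hJA B hB, hCF (hJC hB)⟩
        · -- A = J.sup id
          have himg : (I.sup id).image (fun x => x + a)
              = I.sup (fun U => U.image (fun x => x + a)) :=
            sup_hom_aux _ (by simp) (fun A B => Finset.image_union _ _) I
          have h1 : J.sup id = J.sup (fun B => S ∪ B.filter (fun x => a < x)) := by
            apply Finset.sup_congr rfl
            intro B hB
            rw [id]
            conv_lhs => rw [← Finset.filter_union_filter_not_eq (fun x => a < x) B]
            rw [(hCmem B (hJC hB)).2.2, Finset.union_comm]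
          have h2 : J.sup (fun B => S ∪ B.filter (fun x => a < x))
              = S ∪ J.sup (fun B => B.filter (fun x => a < x)) := by
            ext x
            simp only [Finset.mem_sup, Finset.mem_union]
            obtain ⟨B₀, hB₀⟩ := hJne
            constructor
            · rintro ⟨B, hB, hx | hx⟩
              · exact Or.inl hx
              · exact Or.inr ⟨B, hB, hx⟩
            · rintro (hx | ⟨B, hB, hx⟩)
              · exact ⟨B₀, hB₀, Or.inl hx⟩
              · exact ⟨B, hB, Or.inr hx⟩
          have h3 : J.sup (fun B => B.filter (fun x => a < x))
              = (I.sup id).image (fun x => x + a) := by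
            rw [himg, ← hJimg, Finset.sup_image]
            apply Finset.sup_congr rfl
            intro B _
            exact (hrec B).symm
          rw [h1, h2, h3, ← heq]
          conv_lhs => rw [hdecomp A, (hCmem A hAC).2.2]
    calc ∑ S ∈ (Finset.Icc 1 a).powerset,
        (F₁.filter (fun A => A.filter (fun x => ¬ a < x) = S)).card
        ≤ ∑ S ∈ (Finset.Icc 1 a).powerset, M b := Finset.sum_le_sum hbound
      _ = 2 ^ a * M b := by simp [Finset.card_powerset, mul_comm]

/-- `M(ck) ≤ (2^{ck} - 1) · M(k) / (2^k - 1)`, stated in the equivalent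
cross-multiplied form since `2^k - 1 > 0`. -/
theorem M_mul_bound (c k : ℕ) (hc : 0 < c) (hk : 0 < k) :
    (2 ^ k - 1) * M (c * k) ≤ (2 ^ (c * k) - 1) * M k := by
  induction c with
  | zero => omega
  | succ c ih =>
    rcases Nat.eq_zero_or_pos c with rfl | hc'
    · simp
    · have ih' := ih hc'
      have hsub := M_subadd (c * k) k
      rw [Nat.succ_mul]
      have hx : 1 ≤ 2 ^ k := Nat.one_le_two_pow
      have hy : 1 ≤ 2 ^ (c * k) := Nat.one_le_two_pow
      have hz : 1 ≤ 2 ^ (c * k + k) := Nat.one_le_two_pow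
      have hpow : 2 ^ (c * k + k) = 2 ^ (c * k) * 2 ^ k := pow_add 2 _ _
      zify [hx, hy, hz] at ih' ⊢
      rw [pow_add]
      push_cast
      have hsubZ : (M (c*k+k) : ℤ) ≤ (M (c*k) : ℤ) + 2 ^ (c*k) * (M k : ℤ) := by
        exact_mod_cast hsub
      have hxZ : (1:ℤ) ≤ 2 ^ k := by exact_mod_cast hx
      have hyZ : (1:ℤ) ≤ 2 ^ (c*k) := by exact_mod_cast hy
      nlinarith [mul_le_mul_of_nonneg_left hsubZ (by linarith : (0:ℤ) ≤ (2:ℤ)^k - 1),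
        (Nat.cast_nonneg (M k) : (0:ℤ) ≤ M k),
        (Nat.cast_nonneg (M (c*k)) : (0:ℤ) ≤ M (c*k))]
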